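/- Let H be a symmetric positive semidefinite operator as in the sGS decomposition with T = U D⁻¹ U* and suppose Ĥ := H + T is positive definite. Given error vectors δ', δ with δ'₁ = δ₁, define Δ(δ',δ) := δ + U D⁻¹ (δ − δ'). Then ‖Ĥ^{-1/2} Δ(δ',δ)‖ ≤ ‖D^{-1/2}(δ − δ')‖ + ‖Ĥ^{-1/2} δ'‖. -/

import Mathlib

open Matrix

private lemma dot_transfer {N : ℕ} (A : Matrix (Fin N) (Fin N) ℝ) (x y : Fin N → ℝ) :
    (A *ᵥ x) ⬝ᵥ y = x ⬝ᵥ Aᵀ *ᵥ y := by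
  rw [dotProduct_mulVec, vecMul_transpose]

private lemma sqrt_dot_triangle {N : ℕ} (u v : Fin N → ℝ) :
    Real.sqrt ((u + v) ⬝ᵥ (u + v)) ≤ Real.sqrt (u ⬝ᵥ u) + Real.sqrt (v ⬝ᵥ v) := by
  have key : ∀ w : Fin N → ℝ, Real.sqrt (w ⬝ᵥ w) = ‖(EuclideanSpace.equiv (Fin N) ℝ).symm w‖ := by
    intro w
    rw [EuclideanSpace.norm_eq]
    congr 1
    simp [dotProduct, Real.norm_eq_abs, sq_abs, sq]
  rw [key, key, key]
  have h := norm_add_le ((EuclideanSpace.equiv (Fin N) ℝ).symm u)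
      ((EuclideanSpace.equiv (Fin N) ℝ).symm v)
  simpa [map_add] using h

theorem stmt_3 {N s : ℕ} [NeZero s] (b : Fin N → Fin s)
    (H D U : Matrix (Fin N) (Fin N) ℝ)
    (hH : H.PosSemidef)
    (hdecomp : H = D + U + Uᵀ)
    (hD : D.PosDef)
    (hDdiag : ∀ i j, b i ≠ b j → D i j = 0)
    (hU : ∀ i j, b j ≤ b i → U i j = 0)
    (hHhat : (H + U * D⁻¹ * Uᵀ).PosDef)
    (δ' δ : Fin N → ℝ)
    (hfirst : ∀ i, b i = 0 → δ' i = δ i) :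
    Real.sqrt ((δ + (U * D⁻¹).mulVec (δ - δ')) ⬝ᵥ
        (H + U * D⁻¹ * Uᵀ)⁻¹.mulVec (δ + (U * D⁻¹).mulVec (δ - δ')))
      ≤ Real.sqrt ((δ - δ') ⬝ᵥ D⁻¹.mulVec (δ - δ'))
        + Real.sqrt (δ' ⬝ᵥ (H + U * D⁻¹ * Uᵀ)⁻¹.mulVec δ') := by
  set Hh := H + U * D⁻¹ * Uᵀ with hHh
  set M := (D + U) * D⁻¹ with hM
  set e := δ - δ' with he
  have hDdet : IsUnit D.det := isUnit_iff_ne_zero.2 hD.det_pos.ne'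
  have hDt : Dᵀ = D := by have := hD.1.eq; simpa using this
  have h1 : D * D⁻¹ = 1 := D.mul_nonsing_inv hDdet
  have h2 : D⁻¹ * D = 1 := D.nonsing_inv_mul hDdet
  have h3 : D⁻¹ᵀ = D⁻¹ := by rw [transpose_nonsing_inv, hDt]
  have hfact : Hh = M * D * Mᵀ := by
    rw [hHh, hM, hdecomp, transpose_mul, h3, transpose_add, hDt]
    simp only [Matrix.mul_add, Matrix.add_mul, ← Matrix.mul_assoc, h1, h2,
      Matrix.one_mul, Matrix.mul_one,
      Matrix.nonsing_inv_mul_cancel_right _ _ hDdet, Matrix.mul_nonsing_inv_cancel_right _ _ hDdet]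
    abel
  have hMdet : IsUnit M.det := by
    have hdet : Hh.det = M.det * D.det * M.det := by
      rw [hfact, det_mul, det_mul, det_transpose]
    have h0 : Hh.det ≠ 0 := hHhat.det_pos.ne'
    rw [hdet] at h0
    exact isUnit_iff_ne_zero.2 fun h => h0 (by rw [h]; ring)
  have hMtdet : IsUnit Mᵀ.det := by rwa [det_transpose]
  have hkey : Mᵀ * Hh⁻¹ * M = D⁻¹ := by
    rw [hfact, Matrix.mul_inv_rev, Matrix.mul_inv_rev]
    rw [← Matrix.mul_assoc, ← Matrix.mul_assoc, Matrix.mul_nonsing_inv _ hMtdet,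
      Matrix.one_mul, Matrix.mul_assoc, Matrix.mul_assoc,
      Matrix.nonsing_inv_mul _ hMdet, Matrix.mul_one]
  -- square root of Hh⁻¹
  have hA : (Hh⁻¹).PosDef := hHhat.inv
  open scoped MatrixOrder in set S := CFC.sqrt (Hh⁻¹) with hS
  have hSS : S * S = Hh⁻¹ := by
    open scoped MatrixOrder in exact CFC.sqrt_mul_sqrt_self _ hA.posSemidef.nonneg
  have hSt : Sᵀ = S := by
    open scoped MatrixOrder in
      have := (CFC.sqrt_nonneg (Hh⁻¹)).posSemidef.1.eq; simpa using this
  have quad : ∀ x : Fin N → ℝ, x ⬝ᵥ Hh⁻¹ *ᵥ x = (S *ᵥ x) ⬝ᵥ (S *ᵥ x) := by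
    intro x
    rw [dot_transfer, hSt, mulVec_mulVec, hSS]
  -- decomposition of Δ
  have hΔ : δ + (U * D⁻¹) *ᵥ e = M *ᵥ e + δ' := by
    have : M *ᵥ e = e + (U * D⁻¹) *ᵥ e := by
      rw [hM, Matrix.add_mul, h1, Matrix.add_mulVec, Matrix.one_mulVec]
    rw [this, he]
    abel
  -- the first term identity
  have hterm : (M *ᵥ e) ⬝ᵥ Hh⁻¹ *ᵥ (M *ᵥ e) = e ⬝ᵥ D⁻¹ *ᵥ e := by
    rw [mulVec_mulVec, dot_transfer, mulVec_mulVec, ← Matrix.mul_assoc, hkey]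
  calc Real.sqrt ((δ + (U * D⁻¹) *ᵥ e) ⬝ᵥ Hh⁻¹ *ᵥ (δ + (U * D⁻¹) *ᵥ e))
      = Real.sqrt ((S *ᵥ (M *ᵥ e) + S *ᵥ δ') ⬝ᵥ (S *ᵥ (M *ᵥ e) + S *ᵥ δ')) := by
        rw [hΔ, quad, Matrix.mulVec_add]
    _ ≤ Real.sqrt ((S *ᵥ (M *ᵥ e)) ⬝ᵥ (S *ᵥ (M *ᵥ e)))
        + Real.sqrt ((S *ᵥ δ') ⬝ᵥ (S *ᵥ δ')) := sqrt_dot_triangle _ _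
    _ = Real.sqrt (e ⬝ᵥ D⁻¹ *ᵥ e) + Real.sqrt (δ' ⬝ᵥ Hh⁻¹ *ᵥ δ') := by
        rw [← quad, ← quad, hterm]
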